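/- Let R be an almost Dedekind domain and I a nonzero integral ideal of R. Then the zero set of ν_I equals D(I) ∩ Max(R) and the support of ν_I (closure in Max(R) with the inverse topology) equals V(I) ∩ Max(R); in particular the support of ν_I is compact and disjoint from the zero set. -/

import Mathlib

open Filter Topology


def AlmostDedekind (R : Type*) [CommRing R] [IsDomain R] : Prop :=
  ∀ M : MaximalSpectrum R, IsDiscreteValuationRing (Localization.AtPrime M.asIdeal)

/-- The inverse topology on the maximal spectrum. -/
def invTop (R : Type*) [CommRing R] : TopologicalSpace (MaximalSpectrum R) :=
  .generateFrom {s | ∃ I : Ideal R, I.FG ∧ s = {M | I ≤ M.asIdeal}}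

/-- In an almost Dedekind domain, every nonzero prime ideal is maximal. -/
theorem AlmostDedekind.isMaximal_of_prime {R : Type*} [CommRing R] [IsDomain R]
    (hR : AlmostDedekind R) {P : Ideal R} (hP : P.IsPrime) (hP0 : P ≠ ⊥) : P.IsMaximal := by
  obtain ⟨M, hM, hPM⟩ := P.exists_le_maximal hP.ne_top
  haveI hdvr := hR ⟨M, hM⟩
  haveI : M.IsPrime := hM.isPrime
  set S := Localization.AtPrime M with hS
  have hdisj : Disjoint (M.primeCompl : Set R) (P : Set R) := by
    rw [Set.disjoint_left]
    intro x hx hxP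
    exact hx (hPM hxP)
  have hQ : (P.map (algebraMap R S)).IsPrime :=
    IsLocalization.isPrime_of_isPrime_disjoint M.primeCompl S P hP hdisj
  have hQ0 : P.map (algebraMap R S) ≠ ⊥ := by
    obtain ⟨a, haP, ha0⟩ := Submodule.exists_mem_ne_zero_of_ne_bot hP0
    intro h
    have h1 : algebraMap R S a ∈ (⊥ : Ideal S) := h ▸ Ideal.mem_map_of_mem _ haP
    rw [Ideal.mem_bot] at h1
    have h2 : algebraMap R S a = algebraMap R S 0 := by simpa using h1
    exact ha0 (IsLocalization.injective S M.primeCompl_le_nonZeroDivisors h2)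
  haveI := hQ
  have hQmax : (P.map (algebraMap R S)).IsMaximal := IsPrime.to_maximal_ideal hQ0
  have heq : P.map (algebraMap R S) = IsLocalRing.maximalIdeal S :=
    IsLocalRing.eq_maximalIdeal hQmax
  have h1 := IsLocalization.comap_map_of_isPrime_disjoint M.primeCompl S (I := P) hP hdisj
  rw [heq] at h1
  have hPMeq : P = M := by
    rw [← h1, Localization.AtPrime.comap_maximalIdeal]
  exact hPMeq ▸ hM

/-- Let `R` be an almost Dedekind domain, `I` a nonzero integral ideal, and `ν M` the
exponent with `I R_M = (M R_M)^(ν M)` (the greatest `n` with `I ⊆ M^n`).  Then the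
zero set of `ν` is `D(I) ∩ Max(R)`, the support of `ν` (closure of the non-zero set
in the inverse topology) is `V(I) ∩ Max(R)`, and in particular the support is
compact and disjoint from the zero set. -/
theorem stmt7 {R : Type*} [CommRing R] [IsDomain R] (hR : AlmostDedekind R)
    (I : Ideal R) (hI : I ≠ ⊥)
    (ν : MaximalSpectrum R → ℤ)
    (hν : ∀ M : MaximalSpectrum R, 0 ≤ ν M ∧ I ≤ M.asIdeal ^ (ν M).toNat ∧
      ¬ I ≤ M.asIdeal ^ ((ν M).toNat + 1)) :
    {M : MaximalSpectrum R | ν M = 0} = {M | ¬ I ≤ M.asIdeal} ∧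
    @closure _ (invTop R) {M : MaximalSpectrum R | ν M ≠ 0} = {M | I ≤ M.asIdeal} ∧
    @IsCompact _ (invTop R) (@closure _ (invTop R) {M : MaximalSpectrum R | ν M ≠ 0}) ∧
    Disjoint (@closure _ (invTop R) {M : MaximalSpectrum R | ν M ≠ 0})
      {M : MaximalSpectrum R | ν M = 0} := by
  letI : TopologicalSpace (MaximalSpectrum R) := invTop R
  -- The pointwise characterization of the zero set.
  have key : ∀ M : MaximalSpectrum R, ν M = 0 ↔ ¬ I ≤ M.asIdeal := by
    intro M
    obtain ⟨h0, h1, h2⟩ := hν M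
    constructor
    · intro h hle
      apply h2
      have ht : (ν M).toNat = 0 := by simp [h]
      rw [ht, zero_add, pow_one]
      exact hle
    · intro h
      by_contra hne
      have ht : (ν M).toNat ≠ 0 := by omega
      exact h (le_trans h1 (Ideal.pow_le_self ht))
  have hzero : {M : MaximalSpectrum R | ν M = 0} = {M | ¬ I ≤ M.asIdeal} :=
    Set.ext fun M => key M
  have hset : {M : MaximalSpectrum R | ν M ≠ 0} = {M | I ≤ M.asIdeal} := by
    ext M
    simp only [Set.mem_setOf_eq, ne_eq, key M, not_not]
  -- D(I) is open in the inverse topology.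
  have hopen : IsOpen {M : MaximalSpectrum R | ¬ I ≤ M.asIdeal} := by
    rw [isOpen_iff_forall_mem_open]
    intro M hM
    rw [Set.mem_setOf_eq, SetLike.not_le_iff_exists] at hM
    obtain ⟨a, haI, haM⟩ := hM
    obtain ⟨y, s, hsM, hys⟩ := M.isMaximal.exists_inv haM
    refine ⟨{N : MaximalSpectrum R | Ideal.span {s} ≤ N.asIdeal}, ?_, ?_, ?_⟩
    · intro N hN
      rw [Set.mem_setOf_eq] at hN ⊢
      intro hle
      have hsN : s ∈ N.asIdeal := hN (Ideal.mem_span_singleton_self s)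
      have h1 : (1 : R) ∈ N.asIdeal := by
        rw [← hys]
        exact add_mem (N.asIdeal.mul_mem_left y (hle haI)) hsN
      exact N.isMaximal.ne_top ((Ideal.eq_top_iff_one _).mpr h1)
    · exact TopologicalSpace.isOpen_generateFrom_of_mem
        ⟨Ideal.span {s}, ⟨{s}, by simp⟩, rfl⟩
    · rw [Set.mem_setOf_eq, Ideal.span_le, Set.singleton_subset_iff]
      exact hsM
  have hclosed : IsClosed {M : MaximalSpectrum R | I ≤ M.asIdeal} := by
    have hc : {M : MaximalSpectrum R | I ≤ M.asIdeal}
        = {M : MaximalSpectrum R | ¬ I ≤ M.asIdeal}ᶜ := by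
      ext M; simp
    rw [hc]
    exact isClosed_compl_iff.mpr hopen
  have hclosure : @closure _ (invTop R) {M : MaximalSpectrum R | ν M ≠ 0}
      = {M : MaximalSpectrum R | I ≤ M.asIdeal} := by
    rw [hset]
    exact hclosed.closure_eq
  -- V(I) is compact in the inverse topology.
  have hcomp : IsCompact {M : MaximalSpectrum R | I ≤ M.asIdeal} := by
    rw [isCompact_iff_ultrafilter_le_nhds]
    intro f hf
    rw [Filter.le_principal_iff] at hf
    set P : Ideal R :=
      { carrier := {a | {M : MaximalSpectrum R | a ∈ M.asIdeal} ∈ f}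
        add_mem' := fun {a b} ha hb => Filter.mem_of_superset (Filter.inter_mem ha hb)
          (fun M hM => M.asIdeal.add_mem hM.1 hM.2)
        zero_mem' := Filter.mem_of_superset Filter.univ_mem (fun M _ => M.asIdeal.zero_mem)
        smul_mem' := fun c a ha => Filter.mem_of_superset ha
          (fun M h => Ideal.mul_mem_left _ c h) } with hPdef
    have hIP : I ≤ P := by
      intro a haI
      show {M : MaximalSpectrum R | a ∈ M.asIdeal} ∈ f
      exact Filter.mem_of_superset hf (fun M hM => hM haI)
    have hPne : P ≠ ⊤ := by
      intro h
      have h1 : (1 : R) ∈ P := h ▸ Submodule.mem_top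
      have h2 : {M : MaximalSpectrum R | (1 : R) ∈ M.asIdeal} ∈ f := h1
      have h3 : {M : MaximalSpectrum R | (1 : R) ∈ M.asIdeal} = ∅ := by
        ext M
        simp only [Set.mem_setOf_eq, Set.mem_empty_iff_false, iff_false]
        exact fun hm => M.isMaximal.ne_top ((Ideal.eq_top_iff_one _).mpr hm)
      rw [h3] at h2
      exact Filter.empty_notMem (f : Filter (MaximalSpectrum R)) h2
    have hPprime : P.IsPrime := by
      refine ⟨hPne, ?_⟩
      intro a b hab
      have hab' : {M : MaximalSpectrum R | a * b ∈ M.asIdeal} ∈ f := hab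
      have hu : {M : MaximalSpectrum R | a * b ∈ M.asIdeal}
          = {M : MaximalSpectrum R | a ∈ M.asIdeal} ∪ {M | b ∈ M.asIdeal} := by
        ext M
        simp only [Set.mem_setOf_eq, Set.mem_union]
        exact ⟨fun h => M.isMaximal.isPrime.mem_or_mem h,
          fun h => h.elim (fun h => Ideal.mul_mem_right _ _ h)
            (fun h => Ideal.mul_mem_left _ _ h)⟩
      rw [hu] at hab'
      exact Ultrafilter.union_mem_iff.mp hab'
    have hP0 : P ≠ ⊥ := by
      obtain ⟨a, haI, ha0⟩ := Submodule.exists_mem_ne_zero_of_ne_bot hI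
      intro h
      have : a ∈ (⊥ : Ideal R) := h ▸ hIP haI
      exact ha0 (by simpa using this)
    have hPmax := hR.isMaximal_of_prime hPprime hP0
    refine ⟨⟨P, hPmax⟩, hIP, ?_⟩
    have hnhds : (𝓝 (⟨P, hPmax⟩ : MaximalSpectrum R) : Filter (MaximalSpectrum R))
        = ⨅ s ∈ {s | (⟨P, hPmax⟩ : MaximalSpectrum R) ∈ s
            ∧ s ∈ {s | ∃ J : Ideal R, J.FG ∧ s = {M : MaximalSpectrum R | J ≤ M.asIdeal}}}, 𝓟 s :=
      TopologicalSpace.nhds_generateFrom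
    rw [hnhds, le_iInf₂_iff]
    rintro s ⟨hPmem, ⟨J, hJfg, rfl⟩⟩
    rw [Filter.le_principal_iff]
    obtain ⟨T, rfl⟩ := hJfg
    have hset2 : {M : MaximalSpectrum R | Ideal.span (↑T : Set R) ≤ M.asIdeal}
        = ⋂ a ∈ T, {M : MaximalSpectrum R | a ∈ M.asIdeal} := by
      ext M
      simp [Ideal.span_le, Set.subset_def]
    rw [hset2]
    refine (Filter.biInter_mem T.finite_toSet).mpr (fun a haT => ?_)
    have haP : a ∈ P := hPmem (Ideal.subset_span haT)
    exact haP
  refine ⟨hzero, hclosure, ?_, ?_⟩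
  · rw [hclosure]; exact hcomp
  · rw [hclosure, hzero]
    exact Set.disjoint_left.mpr (fun M h h' => h' h)
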